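/- Let K be a compact topological group with Haar probability measure m, and let E ⊆ K be a Borel set with m(E) > 0. Define U := {k ∈ K : m(E ∩ k·E) > 0}. Then there exists a finite set F ⊆ K with |F| ≤ ⌊1/m(E)⌋ such that F·U = K. -/

import Mathlib

open scoped Pointwise ENNReal

open MeasureTheory

/-- Syndeticity index bound for the self-correlation set of a positive-measure set in a
compact group. -/
theorem stmt1 {K : Type*} [Group K] [TopologicalSpace K] [IsTopologicalGroup K]
    [CompactSpace K] [T2Space K] [MeasurableSpace K] [BorelSpace K]
    (m : Measure K) [m.IsHaarMeasure] [IsProbabilityMeasure m]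
    (E : Set K) (hE : MeasurableSet E) (hEpos : 0 < m E) :
    ∃ F : Finset K, F.card ≤ ⌊1 / (m E).toReal⌋₊ ∧
      (F : Set K) * {k : K | 0 < m (E ∩ k • E)} = Set.univ := by
  classical
  set U : Set K := {k : K | 0 < m (E ∩ k • E)} with hU
  set P : Finset K → Prop := fun F =>
    ∀ f ∈ F, ∀ g ∈ F, f ≠ g → m ((f • E) ∩ (g • E)) = 0 with hP
  have hmE_ne : m E ≠ 0 := hEpos.ne'
  have hmE_ne_top : m E ≠ ⊤ := (measure_lt_top m E).ne
  -- cardinality bound for any F satisfying P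
  have hcard : ∀ F : Finset K, P F → F.card ≤ ⌊1 / (m E).toReal⌋₊ := by
    intro F hF
    have hsum : m (⋃ f ∈ F, f • E) = ∑ f ∈ F, m (f • E) := by
      apply measure_biUnion_finset₀
      · intro f hf g hg hfg
        exact hF f hf g hg hfg
      · intro f _
        exact (hE.const_smul f).nullMeasurableSet
    have hsum' : ∑ f ∈ F, m (f • E) = (F.card : ℝ≥0∞) * m E := by
      have h1 : ∀ f ∈ F, m (f • E) = m E := fun f _ => measure_smul (μ := m) f E
      rw [Finset.sum_congr rfl h1, Finset.sum_const, nsmul_eq_mul]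
    have hle : (F.card : ℝ≥0∞) * m E ≤ 1 := by
      rw [← hsum', ← hsum]
      simpa using measure_mono (μ := m) (Set.subset_univ (⋃ f ∈ F, f • E))
    have hdiv : (F.card : ℝ≥0∞) ≤ 1 / m E := by
      rw [ENNReal.le_div_iff_mul_le (Or.inl hmE_ne) (Or.inl hmE_ne_top)]
      exact hle
    have : (F.card : ℝ) ≤ 1 / (m E).toReal := by
      have := ENNReal.toReal_mono (by simp [ENNReal.div_eq_top, hmE_ne]) hdiv
      simpa [ENNReal.toReal_div] using this
    exact Nat.le_floor this
  -- choose F of maximal cardinality with P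
  set S : Set ℕ := {n | ∃ F : Finset K, P F ∧ F.card = n} with hS
  have hS0 : 0 ∈ S := ⟨∅, by simp [hP], rfl⟩
  have hSbdd : BddAbove S := by
    refine ⟨⌊1 / (m E).toReal⌋₊, ?_⟩
    rintro n ⟨F, hF, rfl⟩
    exact hcard F hF
  obtain ⟨F, hF, hFcard⟩ : sSup S ∈ S := Nat.sSup_mem ⟨0, hS0⟩ hSbdd
  refine ⟨F, hcard F hF, ?_⟩
  apply Set.eq_univ_of_forall
  intro k
  by_contra hk
  -- then insert k F also satisfies P, contradicting maximality
  have hkF : k ∉ F := by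
    intro hkF
    apply hk
    refine ⟨k, hkF, 1, ?_, mul_one k⟩
    simpa [hU] using hEpos
  have hknew : ∀ f ∈ F, m ((f • E) ∩ (k • E)) = 0 := by
    intro f hf
    by_contra hne
    apply hk
    refine ⟨f, hf, f⁻¹ * k, ?_, by group⟩
    have : f • (E ∩ (f⁻¹ * k) • E) = (f • E) ∩ (k • E) := by
      rw [Set.smul_set_inter, smul_smul]
      simp
    have hmeq : m (E ∩ (f⁻¹ * k) • E) = m ((f • E) ∩ (k • E)) := by
      rw [← this, measure_smul (μ := m)]
    rw [hU, Set.mem_setOf_eq, hmeq]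
    exact pos_iff_ne_zero.mpr hne
  have hP' : P (insert k F) := by
    intro f hf g hg hfg
    rw [Finset.mem_insert] at hf hg
    obtain hf | hf := hf <;> obtain hg | hg := hg
    · exact absurd (hf.trans hg.symm) hfg
    · subst hf; rw [Set.inter_comm]; exact hknew g hg
    · subst hg; exact hknew f hf
    · exact hF f hf g hg hfg
  have : (insert k F).card ∈ S := ⟨insert k F, hP', rfl⟩
  have hle := le_csSup hSbdd this
  rw [Finset.card_insert_of_notMem hkF, hFcard] at hle
  omega
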